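/- Let s_1,...,s_n be nonnegative real numbers and C > 0. Suppose that for every vector μ = (μ_1,...,μ_n) of nonnegative integers with Σμ_i = N, the multinomial coefficient binom(N; μ) times Π s_i^{μ_i} is at most C^N. Then Σ_{i=1}^n s_i ≤ C. -/

import Mathlib

open Finset Filter Asymptotics

theorem stmt_0 (n : ℕ) (s : Fin n → ℝ) (C : ℝ)
    (hs : ∀ i, 0 ≤ s i) (hC : 0 < C)
    (h : ∀ N : ℕ, 1 ≤ N → ∀ μ : Fin n → ℕ, (∑ i, μ i) = N →
      (Nat.multinomial Finset.univ μ : ℝ) * ∏ i, s i ^ μ i ≤ C ^ N) :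
    ∑ i, s i ≤ C := by
  by_contra hlt
  push_neg at hlt
  set r : ℝ := (∑ i, s i) / C with hr
  have hr1 : 1 < r := (one_lt_div hC).2 hlt
  -- key bound: r^N ≤ (N+1)^n for all N ≥ 1
  have key : ∀ N : ℕ, 1 ≤ N → r ^ N ≤ ((N + 1 : ℕ) : ℝ) ^ n := by
    intro N hN
    have expand : (∑ i, s i) ^ N =
        ∑ k ∈ piAntidiag (univ : Finset (Fin n)) N,
          (Nat.multinomial univ k : ℝ) * ∏ i, s i ^ k i :=
      Finset.sum_pow_eq_sum_piAntidiag univ s N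
    have hsum : (∑ i, s i) ^ N ≤
        ((piAntidiag (univ : Finset (Fin n)) N).card : ℝ) * C ^ N := by
      rw [expand, ← nsmul_eq_mul, ← Finset.sum_const]
      refine Finset.sum_le_sum fun k hk => ?_
      rw [Finset.mem_piAntidiag] at hk
      exact h N hN k hk.1
    have hcard : ((piAntidiag (univ : Finset (Fin n)) N).card : ℝ) ≤
        ((N + 1 : ℕ) : ℝ) ^ n := by
      have hsub : piAntidiag (univ : Finset (Fin n)) N ⊆
          Fintype.piFinset (fun _ : Fin n => Finset.range (N + 1)) := by
        intro k hk
        rw [Finset.mem_piAntidiag] at hk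
        rw [Fintype.mem_piFinset]
        intro i
        rw [Finset.mem_range, Nat.lt_succ_iff, ← hk.1]
        exact Finset.single_le_sum (fun j _ => Nat.zero_le _) (Finset.mem_univ i)
      calc ((piAntidiag (univ : Finset (Fin n)) N).card : ℝ)
          ≤ ((Fintype.piFinset (fun _ : Fin n => Finset.range (N + 1))).card : ℝ) := by
            exact_mod_cast Finset.card_le_card hsub
        _ = ((N + 1 : ℕ) : ℝ) ^ n := by
            rw [Fintype.card_piFinset]
            simp
    have hCN : (0 : ℝ) < C ^ N := pow_pos hC N
    rw [hr, div_pow, div_le_iff₀ hCN]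
    calc (∑ i, s i) ^ N ≤ ((piAntidiag (univ : Finset (Fin n)) N).card : ℝ) * C ^ N := hsum
      _ ≤ ((N + 1 : ℕ) : ℝ) ^ n * C ^ N := mul_le_mul_of_nonneg_right hcard hCN.le
  -- asymptotics: N^n =o[atTop] r^N
  have hlo : (fun N : ℕ => ((N : ℝ)) ^ n) =o[atTop] (fun N : ℕ => r ^ N) := by
    simpa using isLittleO_pow_const_const_pow_of_one_lt (R := ℝ) n hr1
  have hc : (0 : ℝ) < ((2 : ℝ) ^ n)⁻¹ * (1 / 2) := by positivity
  have hev := hlo.def hc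
  rw [Filter.eventually_atTop] at hev
  obtain ⟨M, hM⟩ := hev
  set N := max M 1 with hN
  have hN1 : 1 ≤ N := le_max_right M 1
  have hNM : M ≤ N := le_max_left M 1
  have hrN : (0 : ℝ) < r ^ N := pow_pos (lt_trans one_pos hr1) N
  have hMspec := hM N hNM
  simp only [Real.norm_eq_abs, abs_pow, Nat.abs_cast, abs_of_pos hrN] at hMspec
  -- (N+1)^n ≤ (2N)^n = 2^n N^n
  have hb : ((N + 1 : ℕ) : ℝ) ^ n ≤ 2 ^ n * (N : ℝ) ^ n := by
    rw [← mul_pow]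
    refine pow_le_pow_left₀ (by positivity) ?_ n
    push_cast
    have : (1 : ℝ) ≤ (N : ℝ) := by exact_mod_cast hN1
    linarith
  have hfinal : r ^ N ≤ (1 / 2) * r ^ N := by
    calc r ^ N ≤ ((N + 1 : ℕ) : ℝ) ^ n := key N hN1
      _ ≤ 2 ^ n * (N : ℝ) ^ n := hb
      _ ≤ 2 ^ n * (((2 : ℝ) ^ n)⁻¹ * (1 / 2) * r ^ N) :=
          mul_le_mul_of_nonneg_left hMspec (by positivity)
      _ = (1 / 2) * r ^ N := by
          field_simp
  nlinarith [hfinal, hrN]
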